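/- Let n ≥ 1, e ≥ 0 and q ≥ 2e + 1 be integers, and let π : ℤ^n → (ℤ/qℤ)^n be the coordinatewise reduction map. Then C ↦ π⁻¹(C) is a bijection from the collection of PL(n,e,q)-codes onto the collection of q-periodic PL(n,e)-codes, with inverse given by taking the image under π. -/

import Mathlib

/-- A `PL(n,e)`-code in `ℤ^n`: every point of `ℤ^n` is within Lee distance `e` of exactly
one codeword. -/
def IsPLCode (n e : ℕ) (C : Set (Fin n → ℤ)) : Prop :=
  ∀ x : Fin n → ℤ, ∃! c, c ∈ C ∧ (∑ i, |x i - c i|) ≤ (e : ℤ)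

/-- `C ⊆ ℤ^n` is `q`-periodic: `C + q·e_i = C` for each standard basis vector `e_i`. -/
def QPeriodic (n q : ℕ) (C : Set (Fin n → ℤ)) : Prop :=
  ∀ i : Fin n, ∀ x : Fin n → ℤ, x ∈ C ↔ x + Pi.single i (q : ℤ) ∈ C

/-- The Lee distance on `(ℤ/qℤ)^n`, computed with representatives in `{0, …, q−1}`. -/
def leeDistZMod (n q : ℕ) (u v : Fin n → ZMod q) : ℕ :=
  ∑ i, min (((u i).val : ℤ) - ((v i).val : ℤ)).natAbs
    (q - (((u i).val : ℤ) - ((v i).val : ℤ)).natAbs)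

/-- A `PL(n,e,q)`-code in `(ℤ/qℤ)^n`. -/
def IsPLqCode (n e q : ℕ) (C : Set (Fin n → ZMod q)) : Prop :=
  ∀ x : Fin n → ZMod q, ∃! c, c ∈ C ∧ leeDistZMod n q x c ≤ e

/-- Coordinatewise reduction `ℤ^n → (ℤ/qℤ)^n`. -/
def redMap (n q : ℕ) : (Fin n → ℤ) → (Fin n → ZMod q) :=
  fun x i => (x i : ZMod q)

/-- For `q ≥ 2e + 1`, taking preimages under the reduction map `π : ℤ^n → (ℤ/qℤ)^n` is a
bijection from the `PL(n,e,q)`-codes onto the `q`-periodic `PL(n,e)`-codes, with inverse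
given by taking images under `π`. -/

lemma val_int_congr (q : ℕ) [NeZero q] (a : ℤ) :
    (((a : ZMod q).val : ℤ)) ≡ a [ZMOD (q:ℤ)] := by
  have h : ((((a : ZMod q).val : ℤ)) : ZMod q) = (a : ZMod q) := by
    push_cast [ZMod.natCast_val, ZMod.cast_id]
    rfl
  exact (ZMod.intCast_eq_intCast_iff _ _ _).1 h

lemma lee_coord_le (q : ℕ) [NeZero q] (a b : ℤ) :
    ((min ((((a:ZMod q).val : ℤ) - (((b:ZMod q).val : ℤ))).natAbs)
      (q - (((a:ZMod q).val : ℤ) - (((b:ZMod q).val : ℤ))).natAbs) : ℕ) : ℤ) ≤ |a - b| := by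
  set r : ℤ := (((a:ZMod q).val : ℤ)) - (((b:ZMod q).val : ℤ)) with hr
  have hra : r.natAbs < q := by
    have h1 := ZMod.val_lt (a : ZMod q)
    have h2 := ZMod.val_lt (b : ZMod q)
    omega
  have hcong : r ≡ a - b [ZMOD (q:ℤ)] := (val_int_congr q a).sub (val_int_congr q b)
  obtain ⟨k, hk⟩ := Int.ModEq.dvd hcong
  rcases eq_or_ne k 0 with h0 | h0
  · have hab : a - b = r := by rw [h0, mul_zero] at hk; linarith
    rw [Int.abs_eq_natAbs]
    omega
  · set t : ℤ := (q:ℤ) * k with htd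
    have ht : a - b - r = t := hk
    have htn : t.natAbs = q * k.natAbs := by rw [htd, Int.natAbs_mul]; simp
    have hq1 : q ≤ t.natAbs := by
      rw [htn]
      exact Nat.le_mul_of_pos_right q (Nat.pos_of_ne_zero (Int.natAbs_ne_zero.mpr h0))
    rw [Int.abs_eq_natAbs]
    omega

lemma lee_coord_lift (q : ℕ) [NeZero q] (a : ℤ) (b : ZMod q) :
    ∃ b' : ℤ, (b' : ZMod q) = b ∧
      (a - b').natAbs = min ((((a:ZMod q).val : ℤ) - ((b.val : ℤ))).natAbs)
        (q - (((a:ZMod q).val : ℤ) - ((b.val : ℤ))).natAbs) := by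
  set r : ℤ := (((a:ZMod q).val : ℤ)) - ((b.val : ℤ)) with hr
  have hra : r.natAbs < q := by
    have h1 := ZMod.val_lt (a : ZMod q)
    have h2 := ZMod.val_lt b
    omega
  have hbv : ((b.val : ℤ) : ZMod q) = b := by
    push_cast [ZMod.natCast_val, ZMod.cast_id]; rfl
  have hcong : ∀ s : ℤ, ((a - r + s * q : ℤ) : ZMod q) = b := by
    intro s
    have hav : (((a : ZMod q).val : ℤ) : ZMod q) = (a : ZMod q) := by
      push_cast [ZMod.natCast_val, ZMod.cast_id]; rfl
    rw [hr]
    push_cast [ZMod.natCast_val, ZMod.cast_id, ZMod.natCast_self]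
    ring
  by_cases hc : 2 * r.natAbs ≤ q
  · refine ⟨a - r, by simpa using hcong 0, ?_⟩
    have : a - (a - r) = r := by ring
    rw [this]; omega
  · rcases le_or_gt 0 r with h0 | h0
    · refine ⟨a - r + q, by simpa using hcong 1, ?_⟩
      have : a - (a - r + q) = r - q := by ring
      rw [this]; omega
    · refine ⟨a - r - q, by simpa using hcong (-1), ?_⟩
      have : a - (a - r - q) = r + q := by ring
      rw [this]; omega

lemma lee_le_sum (n q : ℕ) [NeZero q] (x c : Fin n → ℤ) :
    ((leeDistZMod n q (redMap n q x) (redMap n q c) : ℕ) : ℤ) ≤ ∑ i, |x i - c i| := by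
  rw [leeDistZMod, Nat.cast_sum]
  exact Finset.sum_le_sum fun i _ => lee_coord_le q (x i) (c i)

lemma lee_lift (n q : ℕ) [NeZero q] (x : Fin n → ℤ) (v : Fin n → ZMod q) :
    ∃ c : Fin n → ℤ, redMap n q c = v ∧
      (∑ i, |x i - c i|) = ((leeDistZMod n q (redMap n q x) v : ℕ) : ℤ) := by
  choose c hc1 hc2 using fun i => lee_coord_lift q (x i) (v i)
  refine ⟨c, funext hc1, ?_⟩
  rw [leeDistZMod, Nat.cast_sum]
  refine Finset.sum_congr rfl fun i _ => ?_
  rw [Int.abs_eq_natAbs, hc2 i]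
  rfl

lemma red_eq_iff (q : ℕ) (a b : ℤ) : ((a : ZMod q) = (b : ZMod q)) ↔ (q:ℤ) ∣ b - a := by
  rw [ZMod.intCast_eq_intCast_iff, Int.modEq_iff_dvd]

lemma congr_eq_of_close (n e q : ℕ) (hq : 2 * e + 1 ≤ q) (x c c' : Fin n → ℤ)
    (hcc : redMap n q c = redMap n q c')
    (h1 : (∑ i, |x i - c i|) ≤ (e : ℤ)) (h2 : (∑ i, |x i - c' i|) ≤ (e : ℤ)) : c = c' := by
  funext i
  have hd : (q:ℤ) ∣ c' i - c i := (red_eq_iff q (c i) (c' i)).1 (congrFun hcc i)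
  have hb1 : |x i - c i| ≤ (e : ℤ) := by
    refine le_trans ?_ h1
    exact Finset.single_le_sum (f := fun j => |x j - c j|) (fun j _ => abs_nonneg _) (Finset.mem_univ i)
  have hb2 : |x i - c' i| ≤ (e : ℤ) := by
    refine le_trans ?_ h2
    exact Finset.single_le_sum (f := fun j => |x j - c' j|) (fun j _ => abs_nonneg _) (Finset.mem_univ i)
  have : c' i - c i = 0 := by
    refine Int.eq_zero_of_abs_lt_dvd hd ?_
    have : |c' i - c i| ≤ |x i - c i| + |x i - c' i| := by
      calc |c' i - c i| = |(x i - c i) - (x i - c' i)| := by ring_nf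
        _ ≤ |x i - c i| + |x i - c' i| := abs_sub _ _
    push_cast
    omega
  omega

lemma periodic_congr (n q : ℕ) (D : Set (Fin n → ℤ)) (hD : QPeriodic n q D)
    (x y : Fin n → ℤ) (hxy : ∀ i, (q:ℤ) ∣ y i - x i) : x ∈ D ↔ y ∈ D := by
  have single : ∀ (k : ℤ) (i : Fin n) (z : Fin n → ℤ),
      z ∈ D ↔ z + Pi.single i (k * q) ∈ D := by
    intro k
    induction k using Int.induction_on with
    | zero => intro i z; simp
    | succ k ih =>
      intro i z
      have : (Pi.single i ((k + 1 : ℤ) * q) : Fin n → ℤ) = Pi.single i ((k:ℤ) * q) + Pi.single i (q:ℤ) := by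
        rw [← Pi.single_add]; ring_nf
      rw [this, ← add_assoc]
      exact (ih i z).trans (hD i _)
    | pred k ih =>
      intro i z
      have h1 : (Pi.single i ((-(k:ℤ) - 1) * q) : Fin n → ℤ) + Pi.single i (q:ℤ) = Pi.single i ((-(k:ℤ)) * q) := by
        rw [← Pi.single_add]; ring_nf
      rw [show z + Pi.single i ((-(k:ℤ) - 1) * q) ∈ D ↔
          z + Pi.single i ((-(k:ℤ) - 1) * q) + Pi.single i (q:ℤ) ∈ D from hD i _,
        add_assoc, h1]
      exact ih i z
  have main : ∀ s : Finset (Fin n), ∀ z : Fin n → ℤ,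
      z ∈ D ↔ z + ∑ i ∈ s, Pi.single i (y i - x i) ∈ D := by
    intro s
    induction s using Finset.induction_on with
    | empty => intro z; simp
    | insert _ _ hni ih =>
      rename_i a s'
      intro z
      rw [Finset.sum_insert hni]
      obtain ⟨k, hk⟩ := hxy a
      rw [show z + ((Pi.single a (y a - x a) : Fin n → ℤ) + ∑ i ∈ s', Pi.single i (y i - x i)) =
          (z + Pi.single a (y a - x a)) + ∑ i ∈ s', Pi.single i (y i - x i) by ring]
      refine Iff.trans ?_ (ih _)
      rw [hk, mul_comm]
      exact single k a z
  have := main Finset.univ x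
  rwa [Finset.univ_sum_single (fun i => y i - x i),
    show (x + fun i => y i - x i) = y from funext fun i => by simp] at this

lemma red_add_single (n q : ℕ) (x : Fin n → ℤ) (i : Fin n) :
    redMap n q (x + Pi.single i (q:ℤ)) = redMap n q x := by
  funext j
  simp only [redMap, Pi.add_apply, Pi.single_apply]
  by_cases h : j = i <;> simp [h]

theorem PLq_codes_biject_with_periodic_PL_codes (n e q : ℕ) (hn : 1 ≤ n)
    (hq : 2 * e + 1 ≤ q) :
    Set.BijOn (fun C => redMap n q ⁻¹' C)
        {C : Set (Fin n → ZMod q) | IsPLqCode n e q C}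
        {D : Set (Fin n → ℤ) | IsPLCode n e D ∧ QPeriodic n q D} ∧
      Set.InvOn (fun D => redMap n q '' D) (fun C => redMap n q ⁻¹' C)
        {C : Set (Fin n → ZMod q) | IsPLqCode n e q C}
        {D : Set (Fin n → ℤ) | IsPLCode n e D ∧ QPeriodic n q D} := by
  haveI : NeZero q := ⟨by omega⟩
  have hsurj : Function.Surjective (redMap n q) := by
    intro v
    choose c hc using fun i => ZMod.intCast_surjective (n := q) (v i)
    exact ⟨c, funext hc⟩
  -- A: preimage of a PLq code is a PL code
  have hA : ∀ C : Set (Fin n → ZMod q), IsPLqCode n e q C →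
      IsPLCode n e (redMap n q ⁻¹' C) := by
    intro C hC x
    obtain ⟨cb, ⟨hcbC, hcbd⟩, huniq⟩ := hC (redMap n q x)
    obtain ⟨c, hcred, hcsum⟩ := lee_lift n q x cb
    have hce : (∑ i, |x i - c i|) ≤ (e : ℤ) := by
      rw [hcsum]; exact_mod_cast hcbd
    refine ⟨c, ⟨by simp [Set.mem_preimage, hcred, hcbC], hce⟩, ?_⟩
    rintro c' ⟨hc'C, hc'sum⟩
    have hlee : leeDistZMod n q (redMap n q x) (redMap n q c') ≤ e := by
      have := lee_le_sum n q x c'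
      exact_mod_cast this.trans hc'sum
    have hred : redMap n q c' = cb := huniq _ ⟨hc'C, hlee⟩
    exact congr_eq_of_close n e q hq x c' c (hred.trans hcred.symm) hc'sum hce
  -- B: preimage is q-periodic
  have hB : ∀ C : Set (Fin n → ZMod q), QPeriodic n q (redMap n q ⁻¹' C) := by
    intro C i x
    simp [Set.mem_preimage, red_add_single n q x i]
  -- C: image of a q-periodic PL code is a PLq code
  have hC : ∀ D : Set (Fin n → ℤ), IsPLCode n e D → QPeriodic n q D →
      IsPLqCode n e q (redMap n q '' D) := by
    intro D hD hDper xb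
    obtain ⟨x, rfl⟩ := hsurj xb
    obtain ⟨c, ⟨hcD, hcsum⟩, huniq⟩ := hD x
    have hlee : leeDistZMod n q (redMap n q x) (redMap n q c) ≤ e := by
      have := lee_le_sum n q x c
      exact_mod_cast this.trans hcsum
    refine ⟨redMap n q c, ⟨⟨c, hcD, rfl⟩, hlee⟩, ?_⟩
    rintro cb ⟨⟨d, hdD, rfl⟩, hcbd⟩
    obtain ⟨c', hc'red, hc'sum⟩ := lee_lift n q x (redMap n q d)
    have hc'D : c' ∈ D := by
      refine (periodic_congr n q D hDper c' d fun i => ?_).2 hdD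
      exact (red_eq_iff q (c' i) (d i)).1 (congrFun hc'red i)
    have hc'e : (∑ i, |x i - c' i|) ≤ (e : ℤ) := by
      rw [hc'sum]; exact_mod_cast hcbd
    have : c' = c := huniq c' ⟨hc'D, hc'e⟩
    rw [← hc'red, this]
  -- D: π⁻¹(π '' D) = D for periodic D
  have hDeq : ∀ D : Set (Fin n → ℤ), QPeriodic n q D → redMap n q ⁻¹' (redMap n q '' D) = D := by
    intro D hDper
    ext x
    constructor
    · rintro ⟨d, hdD, hdx⟩
      refine (periodic_congr n q D hDper x d fun i => ?_).2 hdD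
      exact (red_eq_iff q (x i) (d i)).1 (congrFun hdx i).symm
    · intro hx; exact ⟨x, hx, rfl⟩
  have hEeq : ∀ C : Set (Fin n → ZMod q), redMap n q '' (redMap n q ⁻¹' C) = C :=
    fun C => Set.image_preimage_eq C hsurj
  have hinv : Set.InvOn (fun D => redMap n q '' D) (fun C => redMap n q ⁻¹' C)
      {C : Set (Fin n → ZMod q) | IsPLqCode n e q C}
      {D : Set (Fin n → ℤ) | IsPLCode n e D ∧ QPeriodic n q D} := by
    constructor
    · intro C _; exact hEeq C
    · intro D hD; exact hDeq D hD.2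
  refine ⟨⟨?_, ?_, ?_⟩, hinv⟩
  · intro C hCmem
    exact ⟨hA C hCmem, hB C⟩
  · exact hinv.1.injOn
  · intro D hDmem
    exact ⟨redMap n q '' D, hC D hDmem.1 hDmem.2, hDeq D hDmem.2⟩
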